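/- Fix real q with 0 < q < 1 and set p = 1-q and Q = 1/q. For integers M and k with k ≥ M ≥ 1, the function g(w) = Σ_{h≥1} (w q^h)^M / ((1 - w q^{h-1})²(1 - w q^h)) is well-defined and analytic for real w with |w| < 1, and its k-th Taylor coefficient at 0 equals -q^{M+1}/((1-q)²·(1-q^k)) + q^M·(k+1-M)/((1-q)·(1-q^k)) + q²/((1-q)²·(Q^k - 1)). -/

import Mathlib

open Finset

open Finset

/-- `∑ (i+1) x^i = 1/(1-x)^2`. -/
lemma auxSq {x : ℝ} (hx : |x| < 1) :
    HasSum (fun i : ℕ => ((i : ℝ) + 1) * x ^ i) (1 / (1 - x) ^ 2) := by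
  have hx' : ‖x‖ < 1 := by rwa [Real.norm_eq_abs]
  have hne : (1 : ℝ) - x ≠ 0 := by
    have := abs_lt.mp hx
    intro h; nlinarith
  have h := (hasSum_coe_mul_geometric_of_norm_lt_one hx').add
    (hasSum_geometric_of_norm_lt_one hx')
  have e1 : (fun i : ℕ => ((i : ℝ) + 1) * x ^ i) = fun b : ℕ => (b : ℝ) * x ^ b + x ^ b := by
    funext i; ring
  have e2 : (1 : ℝ) / (1 - x) ^ 2 = x / (1 - x) ^ 2 + (1 - x)⁻¹ := by
    field_simp
    ring
  rw [e1, e2]; exact h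

lemma auxT_identity (q : ℝ) (n : ℕ) :
    (1 - q) ^ 2 * (∑ i ∈ range (n + 1), ((i : ℝ) + 1) * q ^ (n - i))
      = -q + ((n : ℝ) + 1) * (1 - q) + q ^ (n + 2) := by
  induction n with
  | zero => simp; ring
  | succ n ih =>
    have hstep : (∑ i ∈ range (n + 2), ((i : ℝ) + 1) * q ^ (n + 1 - i))
        = ((n : ℝ) + 2) + q * ∑ i ∈ range (n + 1), ((i : ℝ) + 1) * q ^ (n - i) := by
      rw [Finset.sum_range_succ]
      have h1 : ∀ i ∈ range (n + 1),
          ((i : ℝ) + 1) * q ^ (n + 1 - i) = q * (((i : ℝ) + 1) * q ^ (n - i)) := by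
        intro i hi
        rw [Finset.mem_range] at hi
        have h2 : n + 1 - i = (n - i) + 1 := by omega
        rw [h2, pow_succ]; ring
      rw [Finset.sum_congr rfl h1, ← Finset.mul_sum]
      push_cast
      simp
      ring
    rw [hstep]
    push_cast
    linear_combination q * ih

noncomputable def auxS (q : ℝ) (M n : ℕ) : ℝ :=
  ∑ i ∈ range (n - M + 1), ((i : ℝ) + 1) * q ^ (n - i)

noncomputable def auxD (q : ℝ) (M h n : ℕ) : ℝ :=
  if M ≤ n then q ^ (h * n) * auxS q M n else 0

noncomputable def auxC (q : ℝ) (M n : ℕ) : ℝ :=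
  if M ≤ n then auxS q M n / (1 - q ^ n) else 0

lemma auxS_nonneg (q : ℝ) (hq : 0 ≤ q) (M n : ℕ) : 0 ≤ auxS q M n := by
  apply Finset.sum_nonneg
  intro i _
  positivity

lemma auxS_le (q : ℝ) (hq0 : 0 ≤ q) (hq1 : q ≤ 1) (M n : ℕ) (hM : 1 ≤ M) :
    auxS q M n ≤ ((n : ℝ) + 1) ^ 2 := by
  rw [auxS]
  calc ∑ i ∈ range (n - M + 1), ((i : ℝ) + 1) * q ^ (n - i)
      ≤ ∑ _i ∈ range (n - M + 1), ((n : ℝ) + 1) := by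
        apply Finset.sum_le_sum
        intro i hi
        rw [Finset.mem_range] at hi
        have h1 : q ^ (n - i) ≤ 1 := pow_le_one₀ hq0 hq1
        have h2 : ((i : ℝ) + 1) ≤ (n : ℝ) + 1 := by
          have : i ≤ n := by omega
          exact_mod_cast by omega
        nlinarith [show (0:ℝ) ≤ (i:ℝ) + 1 by positivity]
    _ = ((n - M + 1 : ℕ) : ℝ) * ((n : ℝ) + 1) := by
        rw [Finset.sum_const, Finset.card_range, nsmul_eq_mul]
    _ ≤ ((n : ℝ) + 1) ^ 2 := by
        have h3 : ((n - M + 1 : ℕ) : ℝ) ≤ (n : ℝ) + 1 := by exact_mod_cast by omega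
        nlinarith [show (0:ℝ) ≤ (n:ℝ) + 1 by positivity, h3]

lemma stepA (q : ℝ) (hq0 : 0 < q) (hq1 : q < 1) (M : ℕ) (hM : 1 ≤ M)
    (h : ℕ) (w : ℝ) (hw : |w| < 1) :
    HasSum (fun n => auxD q M h n * w ^ n)
      ((w * q ^ (h + 1)) ^ M / ((1 - w * q ^ h) ^ 2 * (1 - w * q ^ (h + 1)))) := by
  have habs : ∀ j : ℕ, |w * q ^ j| < 1 := by
    intro j
    rw [abs_mul, abs_of_pos (pow_pos hq0 j)]
    have h1 : q ^ j ≤ 1 := pow_le_one₀ hq0.le hq1.le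
    nlinarith [abs_nonneg w, pow_pos hq0 j]
  have hx := habs h
  have hy := habs (h + 1)
  have hxne : (1 : ℝ) - w * q ^ h ≠ 0 := by
    have := abs_lt.mp hx; intro hc; nlinarith
  have hyne : (1 : ℝ) - w * q ^ (h + 1) ≠ 0 := by
    have := abs_lt.mp hy; intro hc; nlinarith
  have hA := auxSq hx
  have hB := hasSum_geometric_of_norm_lt_one (by rwa [Real.norm_eq_abs] : ‖w * q ^ (h+1)‖ < 1)
  have hAnorm : Summable fun i : ℕ => ‖((i : ℝ) + 1) * (w * q ^ h) ^ i‖ := by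
    apply Summable.congr (auxSq (x := |w * q ^ h|) (by rwa [abs_abs])).summable
    intro i
    rw [norm_mul, norm_pow, Real.norm_eq_abs, Real.norm_eq_abs,
      abs_of_nonneg (by positivity : (0:ℝ) ≤ (i : ℝ) + 1)]
  have hBnorm : Summable fun j : ℕ => ‖(w * q ^ (h + 1)) ^ j‖ := by
    apply Summable.congr (summable_geometric_of_lt_one (abs_nonneg _) hy)
    intro j
    rw [norm_pow, Real.norm_eq_abs]
  have hcauchy := hasSum_sum_range_mul_of_summable_norm hAnorm hBnorm
  rw [hA.tsum_eq, hB.tsum_eq] at hcauchy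
  have hmul := hcauchy.mul_left ((w * q ^ (h + 1)) ^ M)
  have hterm : ∀ n : ℕ,
      (w * q ^ (h + 1)) ^ M * (∑ i ∈ range (n + 1),
        (((i : ℝ) + 1) * (w * q ^ h) ^ i) * (w * q ^ (h + 1)) ^ (n - i))
      = auxD q M h (n + M) * w ^ (n + M) := by
    intro n
    rw [auxD, if_pos (by omega : M ≤ n + M), auxS,
      show n + M - M + 1 = n + 1 from by omega, Finset.mul_sum, Finset.mul_sum,
      Finset.sum_mul]
    apply Finset.sum_congr rfl
    intro i hi
    rw [Finset.mem_range] at hi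
    have hin : i ≤ n := by omega
    have e1 : M + (i + (n - i)) = n + M := by omega
    have e2 : (h + 1) * M + (h * i + (h + 1) * (n - i)) = h * (n + M) + (n + M - i) := by
      obtain ⟨c, rfl⟩ := Nat.le.dest hin
      rw [show i + c - i = c from by omega, show i + c + M - i = c + M from by omega]
      ring
    calc (w * q ^ (h + 1)) ^ M * ((((i : ℝ) + 1) * (w * q ^ h) ^ i) * (w * q ^ (h + 1)) ^ (n - i))
        = ((i : ℝ) + 1) * w ^ (M + (i + (n - i))) * q ^ ((h + 1) * M + (h * i + (h + 1) * (n - i))) := by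
          simp only [mul_pow, ← pow_mul, pow_add]
          ring
      _ = q ^ (h * (n + M)) * (((i : ℝ) + 1) * q ^ (n + M - i)) * w ^ (n + M) := by
          rw [e1, e2, pow_add]
          ring
  rw [funext hterm] at hmul
  have hval : (w * q ^ (h + 1)) ^ M * (1 / (1 - w * q ^ h) ^ 2 * (1 - w * q ^ (h + 1))⁻¹)
      = (w * q ^ (h + 1)) ^ M / ((1 - w * q ^ h) ^ 2 * (1 - w * q ^ (h + 1))) := by
    field_simp
  rw [hval] at hmul
  have hinj : Function.Injective (fun n : ℕ => n + M) := fun a b hab => by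
    simpa using hab
  have hsupp : ∀ m ∉ Set.range (fun n : ℕ => n + M), auxD q M h m * w ^ m = 0 := by
    intro m hm
    have hlt : ¬ M ≤ m := by
      intro hle
      exact hm ⟨m - M, by simp; omega⟩
    rw [auxD, if_neg hlt, zero_mul]
  exact (hinj.hasSum_iff hsupp).mp hmul

lemma sqGeomSummable {r : ℝ} (hr0 : 0 ≤ r) (hr : r < 1) :
    Summable fun n : ℕ => ((n : ℝ) + 1) ^ 2 * r ^ n := by
  have hr' : ‖r‖ < 1 := by rwa [Real.norm_eq_abs, abs_of_nonneg hr0]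
  have h1 := summable_pow_mul_geometric_of_norm_lt_one (R := ℝ) 2 hr'
  have h2 := summable_pow_mul_geometric_of_norm_lt_one (R := ℝ) 1 hr'
  have h3 := summable_geometric_of_lt_one hr0 hr
  apply Summable.congr ((h1.add (h2.mul_left 2)).add h3)
  intro n
  push_cast
  ring

lemma stepB (q : ℝ) (hq0 : 0 < q) (hq1 : q < 1) (M : ℕ) (hM : 1 ≤ M)
    (w : ℝ) (hw : |w| < 1) :
    Summable (Function.uncurry fun h n : ℕ => auxD q M h n * w ^ n) := by
  have hmaj : Summable fun pr : ℕ × ℕ =>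
      q ^ pr.1 * (((pr.2 : ℝ) + 1) ^ 2 * |w| ^ pr.2) := by
    apply Summable.mul_of_nonneg (summable_geometric_of_lt_one hq0.le hq1)
      (sqGeomSummable (abs_nonneg w) hw)
    · intro h; positivity
    · intro n; positivity
  apply Summable.of_norm_bounded hmaj
  rintro ⟨h, n⟩
  simp only [Function.uncurry]
  by_cases hn : M ≤ n
  · rw [Real.norm_eq_abs, abs_mul, abs_pow, auxD, if_pos hn,
      abs_of_nonneg (mul_nonneg (by positivity) (auxS_nonneg q hq0.le M n))]
    calc q ^ (h * n) * auxS q M n * |w| ^ n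
        ≤ q ^ h * ((n : ℝ) + 1) ^ 2 * |w| ^ n := by
          apply mul_le_mul_of_nonneg_right _ (by positivity)
          apply mul_le_mul _ (auxS_le q hq0.le hq1.le M n hM)
            (auxS_nonneg q hq0.le M n) (by positivity)
          exact pow_le_pow_of_le_one hq0.le hq1.le
            (Nat.le_mul_of_pos_right h (by omega))
      _ = q ^ h * (((n : ℝ) + 1) ^ 2 * |w| ^ n) := by ring
  · rw [auxD, if_neg hn, zero_mul, norm_zero]
    positivity

lemma stepC (q : ℝ) (hq0 : 0 < q) (hq1 : q < 1) (M : ℕ) (hM : 1 ≤ M) (n : ℕ) :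
    HasSum (fun h : ℕ => auxD q M h n) (auxC q M n) := by
  by_cases hn : M ≤ n
  · have hqn : q ^ n < 1 := pow_lt_one₀ hq0.le hq1 (by omega)
    have hgeo := hasSum_geometric_of_lt_one (pow_nonneg hq0.le n) hqn
    have heq : (fun h : ℕ => auxD q M h n) = fun h : ℕ => (q ^ n) ^ h * auxS q M n := by
      funext h; rw [auxD, if_pos hn, ← pow_mul, mul_comm h n]
    rw [auxC, if_pos hn, heq, div_eq_mul_inv, mul_comm (auxS q M n)]
    exact hgeo.mul_right (auxS q M n)
  · rw [auxC, if_neg hn]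
    convert hasSum_zero with h
    rw [auxD, if_neg hn]

lemma stepD (q : ℝ) (hq0 : 0 < q) (hq1 : q < 1) (M : ℕ) (hM : 1 ≤ M)
    (w : ℝ) (hw : |w| < 1) :
    HasSum (fun n : ℕ => auxC q M n * w ^ n)
      (∑' h : ℕ, (w * q ^ (h + 1)) ^ M /
        ((1 - w * q ^ h) ^ 2 * (1 - w * q ^ (h + 1)))) := by
  have hB := stepB q hq0 hq1 M hM w hw
  have hinner : ∀ n : ℕ, ∑' h : ℕ, auxD q M h n * w ^ n = auxC q M n * w ^ n := by
    intro n
    rw [tsum_mul_right, (stepC q hq0 hq1 M hM n).tsum_eq]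
  have hsummable : Summable fun n : ℕ => auxC q M n * w ^ n := by
    apply Summable.congr (hB.prod_symm.prod)
    intro n
    exact hinner n
  have hswap : ∑' (n : ℕ) (h : ℕ), auxD q M h n * w ^ n
      = ∑' (h : ℕ) (n : ℕ), auxD q M h n * w ^ n := Summable.tsum_comm hB
  have htsum : ∑' n : ℕ, auxC q M n * w ^ n
      = ∑' h : ℕ, (w * q ^ (h + 1)) ^ M /
        ((1 - w * q ^ h) ^ 2 * (1 - w * q ^ (h + 1))) := by
    rw [← tsum_congr hinner, hswap]
    exact tsum_congr fun h => (stepA q hq0 hq1 M hM h w hw).tsum_eq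
  exact htsum ▸ hsummable.hasSum


/-- For `0 < q < 1`, `p = 1-q`, `Q = 1/q`, `k ≥ M ≥ 1`, the function
`g(w) = Σ_{h≥1} (w q^h)^M / ((1-w q^{h-1})²(1-w q^h))` is well defined and
analytic for `|w| < 1`, and its `k`-th Taylor coefficient at `0` equals
`-q^{M+1}/((1-q)²(1-q^k)) + q^M (k+1-M)/((1-q)(1-q^k)) + q²/((1-q)²(Q^k-1))`. -/
theorem taylor_coeff_position_kernel (q : ℝ) (hq0 : 0 < q) (hq1 : q < 1)
    (p Q : ℝ) (hp : p = 1 - q) (hQ : Q = 1 / q)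
    (M k : ℕ) (hM : 1 ≤ M) (hk : M ≤ k)
    (g : ℝ → ℝ)
    (hg : g = fun w : ℝ => ∑' h : ℕ,
      (w * q ^ (h + 1)) ^ M / ((1 - w * q ^ h) ^ 2 * (1 - w * q ^ (h + 1)))) :
    (∀ w : ℝ, |w| < 1 → Summable (fun h : ℕ =>
      (w * q ^ (h + 1)) ^ M / ((1 - w * q ^ h) ^ 2 * (1 - w * q ^ (h + 1))))) ∧
    AnalyticOnNhd ℝ g {w : ℝ | |w| < 1} ∧
    iteratedDeriv k g 0 / k.factorial =
      -q ^ (M + 1) / ((1 - q) ^ 2 * (1 - q ^ k))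
        + q ^ M * ((k : ℝ) + 1 - M) / ((1 - q) * (1 - q ^ k))
        + q ^ 2 / ((1 - q) ^ 2 * (Q ^ k - 1)) := by
  subst hg
  -- power series setup
  set P := FormalMultilinearSeries.ofScalars ℝ (auxC q M) with hP
  have hPapp : ∀ (n : ℕ) (y : ℝ), (P n fun _ => y) = auxC q M n * y ^ n := by
    intro n y
    rw [hP, FormalMultilinearSeries.ofScalars_apply_eq, smul_eq_mul]
  have hqM : q ^ M < 1 := pow_lt_one₀ hq0.le hq1 (by omega)
  have hCle : ∀ n : ℕ, |auxC q M n| ≤ ((n : ℝ) + 1) ^ 2 / (1 - q ^ M) := by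
    intro n
    rw [auxC]
    by_cases hn : M ≤ n
    · rw [if_pos hn]
      have hqn : q ^ n ≤ q ^ M := pow_le_pow_of_le_one hq0.le hq1.le hn
      have h1 : (0:ℝ) < 1 - q ^ M := by linarith
      have h2 : (0:ℝ) < 1 - q ^ n := by linarith
      rw [abs_of_nonneg (div_nonneg (auxS_nonneg q hq0.le M n) h2.le)]
      apply div_le_div₀ (by positivity) (auxS_le q hq0.le hq1.le M n hM) h1 (by linarith)
    · rw [if_neg hn]
      simp only [abs_zero]
      have h1 : (0:ℝ) < 1 - q ^ M := by linarith
      positivity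
  have hrad : 1 ≤ P.radius := by
    apply ENNReal.le_of_forall_nnreal_lt
    intro r hr
    apply FormalMultilinearSeries.le_radius_of_summable
    have hr1 : (r : ℝ) < 1 := by exact_mod_cast hr
    have hmaj : Summable fun n : ℕ => (((n : ℝ) + 1) ^ 2 / (1 - q ^ M)) * (r : ℝ) ^ n := by
      apply Summable.congr ((sqGeomSummable r.coe_nonneg hr1).mul_right (1 - q ^ M)⁻¹)
      intro n; ring
    refine Summable.of_nonneg_of_le (fun n => ?_) (fun n => ?_) hmaj
    · positivity
    · rw [hP, FormalMultilinearSeries.ofScalars_norm, Real.norm_eq_abs]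
      exact mul_le_mul_of_nonneg_right (hCle n) (by positivity)
  have hmem : ∀ y : ℝ, y ∈ Metric.eball (0:ℝ) 1 ↔ |y| < 1 := by
    intro y
    rw [Metric.mem_eball, edist_dist, dist_zero_right, Real.norm_eq_abs]
    rw [show (1 : ENNReal) = ENNReal.ofReal 1 by simp]
    rw [ENNReal.ofReal_lt_ofReal_iff (by norm_num)]
  have hball : HasFPowerSeriesOnBall
      (fun w : ℝ => ∑' h : ℕ, (w * q ^ (h + 1)) ^ M /
        ((1 - w * q ^ h) ^ 2 * (1 - w * q ^ (h + 1)))) P 0 1 := by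
    refine ⟨hrad, by norm_num, ?_⟩
    intro y hy
    rw [hmem] at hy
    have hD := stepD q hq0 hq1 M hM y hy
    simp only [zero_add, hPapp]
    exact hD
  refine ⟨?_, ?_, ?_⟩
  · intro w hw
    have hB := stepB q hq0 hq1 M hM w hw
    exact Summable.congr hB.prod (fun h => (stepA q hq0 hq1 M hM h w hw).tsum_eq)
  · have hset : {w : ℝ | |w| < 1} = Metric.eball (0:ℝ) 1 := by
      ext w
      rw [Set.mem_setOf_eq, hmem]
    rw [hset]
    exact hball.analyticOnNhd
  · have h1 : iteratedDeriv k (fun w : ℝ => ∑' h : ℕ, (w * q ^ (h + 1)) ^ M /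
        ((1 - w * q ^ h) ^ 2 * (1 - w * q ^ (h + 1)))) 0
        = (k.factorial : ℝ) * auxC q M k := by
      rw [iteratedDeriv_eq_iteratedFDeriv, ← hball.factorial_smul (1:ℝ) k, hPapp,
        one_pow, mul_one, nsmul_eq_mul]
    rw [h1]
    have hkfac : (k.factorial : ℝ) ≠ 0 := by
      exact_mod_cast k.factorial_ne_zero
    rw [mul_comm, mul_div_assoc, div_self hkfac, mul_one]
    -- now the algebraic identity
    have hqk1 : q ^ k < 1 := pow_lt_one₀ hq0.le hq1 (by omega)
    have hqkne : (1:ℝ) - q ^ k ≠ 0 := by linarith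
    have h1q : (1:ℝ) - q ≠ 0 := by linarith
    have hqne : q ≠ 0 := ne_of_gt hq0
    rw [auxC, if_pos hk]
    have hsplit : auxS q M k
        = q ^ M * ∑ i ∈ range (k - M + 1), ((i:ℝ)+1) * q ^ (k - M - i) := by
      rw [auxS, Finset.mul_sum]
      apply Finset.sum_congr rfl
      intro i hi
      rw [Finset.mem_range] at hi
      rw [show k - i = M + (k - M - i) from by omega, pow_add]
      ring
    have hT := auxT_identity q (k - M)
    have hcast : ((k - M : ℕ) : ℝ) = (k:ℝ) - M := by
      exact Nat.cast_sub hk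
    rw [hcast, pow_add] at hT
    have hTval : (∑ i ∈ range (k - M + 1), ((i:ℝ)+1) * q ^ (k - M - i))
        = (-q + ((k:ℝ) - M + 1) * (1-q) + q ^ (k-M) * q ^ 2) / (1-q)^2 := by
      rw [eq_div_iff (pow_ne_zero 2 h1q)]
      linear_combination hT
    have hQk : Q ^ k - 1 = (1 - q ^ k) / q ^ k := by
      rw [hQ, div_pow, one_pow]
      field_simp
    rw [hsplit, hTval, hQk]
    have hqkM : q ^ k = q ^ M * q ^ (k - M) := by
      rw [← pow_add]; congr 1; omega
    rw [pow_succ, hqkM]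
    have hABne : (1:ℝ) - q ^ M * q ^ (k - M) ≠ 0 := by rw [← hqkM]; exact hqkne
    have hA0 : q ^ M ≠ 0 := pow_ne_zero _ hqne
    have hB0 : q ^ (k - M) ≠ 0 := pow_ne_zero _ hqne
    field_simp
    ring
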